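/- Let V be a d-dimensional ℚ-vector space with a symmetric bilinear form of signature (1, d−1), and {H_j}_{j∈J} a family of nonzero pairwise-orthogonal vectors with J₊, J₋, J₀ defined by the sign of H_j·H_j. If #(J₊ ∪ J₀) ≥ 2, then J₊ is empty, #J₋ ≤ d − 2, and #J₀ ≥ #J − (d − 2). -/

import Mathlib

/-- Hodge-index linear algebra: if at least two of the pairwise-orthogonal nonzero vectors
have nonnegative self-pairing, then none has positive self-pairing, at most `d - 2` have
negative self-pairing, and at least `#J - (d - 2)` have self-pairing zero. -/
theorem disjoint_divisors_hodge_index_two_nonneg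
    {V : Type*} [AddCommGroup V] [Module ℚ V] [Module.Finite ℚ V] (d : ℕ)
    (hdim : Module.finrank ℚ V = d)
    (B : LinearMap.BilinForm ℚ V) (hsymm : ∀ v w : V, B v w = B w v)
    (M : V) (hM : 0 < B M M)
    (hneg : ∀ v : V, B M v = 0 → v ≠ 0 → B v v < 0)
    {J : Type*} [Fintype J] (H : J → V) (hne : ∀ j, H j ≠ 0)
    (horth : ∀ j j' : J, j ≠ j' → B (H j) (H j') = 0)
    (h2 : 2 ≤ ({j : J | 0 < B (H j) (H j)} ∪ {j : J | B (H j) (H j) = 0}).ncard) :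
    {j : J | 0 < B (H j) (H j)} = ∅ ∧
    {j : J | B (H j) (H j) < 0}.ncard ≤ d - 2 ∧
    Fintype.card J - (d - 2) ≤ {j : J | B (H j) (H j) = 0}.ncard := by
  classical
  -- key lemma: no positive vector orthogonal to a nonzero nonnegative vector
  have key : ∀ x y : V, 0 < B x x → 0 ≤ B y y → B x y = 0 → y ≠ 0 → False := by
    intro x y hx hy hxy hy0
    have hx0 : x ≠ 0 := by rintro rfl; simp at hx
    have hMx : B M x ≠ 0 := by
      intro h
      have := hneg x h hx0
      linarith
    set v := (B M y) • x - (B M x) • y with hv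
    have hMv : B M v = 0 := by
      simp only [hv, map_sub, map_smul, smul_eq_mul]
      ring
    have hyx : B y x = 0 := by rw [hsymm]; exact hxy
    have hvne : v ≠ 0 := by
      intro h0
      have hbvx : B v x = (B M y) * B x x := by
        simp only [hv, LinearMap.map_sub₂, LinearMap.map_smul₂, smul_eq_mul,
          LinearMap.sub_apply, LinearMap.smul_apply, hyx]
        ring
      rw [h0] at hbvx
      simp only [map_zero, LinearMap.zero_apply] at hbvx
      have hBMy : B M y = 0 := by
        rcases mul_eq_zero.mp hbvx.symm with h | h
        · exact h
        · exact absurd h (ne_of_gt hx)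
      simp only [hv, hBMy, zero_smul, zero_sub, neg_eq_zero, smul_eq_zero] at h0
      rcases h0 with h | h
      · exact hMx h
      · exact hy0 h
    have hlt := hneg v hMv hvne
    have hvv : B v v = (B M y) ^ 2 * B x x + (B M x) ^ 2 * B y y := by
      simp only [hv, map_sub, map_smul, LinearMap.map_sub₂, LinearMap.map_smul₂,
        LinearMap.sub_apply, LinearMap.smul_apply, smul_eq_mul, hyx, hxy]
      ring
    nlinarith [sq_nonneg (B M y), sq_nonneg (B M x)]
  -- Part 1: no positive self-pairing
  have hpos : {j : J | 0 < B (H j) (H j)} = ∅ := by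
    by_contra h
    obtain ⟨j, hj⟩ := Set.nonempty_iff_ne_empty.mpr h
    have h1 : 1 < ({j : J | 0 < B (H j) (H j)} ∪ {j : J | B (H j) (H j) = 0}).ncard := by omega
    obtain ⟨j', hj', hne'⟩ := Set.exists_ne_of_one_lt_ncard h1 j
    exact key (H j) (H j') hj (by
      rcases hj' with h' | h'
      · exact le_of_lt h'
      · exact le_of_eq (Eq.symm h')) (horth j j' (Ne.symm hne')) (hne j')
  -- consequence: every index has nonpositive self-pairing
  have hnp : ∀ j : J, ¬ (0 < B (H j) (H j)) := fun j hj =>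
    Set.eq_empty_iff_forall_notMem.mp hpos j hj
  -- Part 2
  have hzero_ex : ∃ j₀ : J, B (H j₀) (H j₀) = 0 := by
    have : ({j : J | 0 < B (H j) (H j)} ∪ {j : J | B (H j) (H j) = 0}).Nonempty := by
      apply Set.nonempty_of_ncard_ne_zero; omega
    obtain ⟨j, hj⟩ := this
    rcases hj with hj | hj
    · exact absurd hj (hnp j)
    · exact ⟨j, hj⟩
  obtain ⟨j₀, hj₀⟩ := hzero_ex
  set S : Finset J := Finset.univ.filter (fun j => B (H j) (H j) < 0) with hS
  have hj₀S : j₀ ∉ S := by simp [hS, hj₀]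
  set T : Finset J := insert j₀ S with hT
  have hmemT : ∀ i : T, B (H (i : J)) (H (i : J)) ≤ 0 := by
    rintro ⟨i, hi⟩
    rcases Finset.mem_insert.mp hi with h | h
    · simp only [h]; exact le_of_eq hj₀
    · exact le_of_lt (by simpa [hS] using h)
  -- diagonal computation for sums
  have hdiag : ∀ (c : T → ℚ),
      B (∑ i : T, c i • H (i : J)) (∑ i : T, c i • H (i : J))
        = ∑ i : T, c i ^ 2 * B (H (i : J)) (H (i : J)) := by
    intro c
    rw [LinearMap.BilinForm.sum_left]
    simp only [LinearMap.BilinForm.sum_right, LinearMap.BilinForm.smul_left,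
      LinearMap.BilinForm.smul_right, smul_eq_mul]
    apply Finset.sum_congr rfl
    intro i _
    rw [Finset.sum_eq_single i]
    · ring
    · intro k _ hk
      have : (k : J) ≠ (i : J) := fun e => hk (Subtype.ext e)
      rw [horth _ _ (Ne.symm this)]; ring
    · intro h; exact absurd (Finset.mem_univ i) h
  -- the span of the H i, i ∈ T
  set W : Submodule ℚ V := Submodule.span ℚ (Set.range (fun i : T => H (i : J))) with hW
  have hMW : M ∉ W := by
    intro hMem
    obtain ⟨c, hc⟩ := (Submodule.mem_span_range_iff_exists_fun ℚ).mp hMem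
    have : B M M ≤ 0 := by
      rw [← hc, hdiag]
      apply Finset.sum_nonpos
      intro i _
      exact mul_nonpos_of_nonneg_of_nonpos (sq_nonneg _) (hmemT i)
    linarith
  have hWne : W ≠ ⊤ := fun h => hMW (h ▸ Submodule.mem_top)
  have hWlt : Module.finrank ℚ W < d := by
    rw [← hdim]
    exact Submodule.finrank_lt hWne
  -- linear independence of the family
  have hli : LinearIndependent ℚ (fun i : T => H (i : J)) := by
    rw [Fintype.linearIndependent_iff]
    intro c hc
    have hSzero : ∀ i : T, (i : J) ∈ S → c i = 0 := by
      rintro ⟨i, hi⟩ hiS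
      have : B (∑ k : T, c k • H (k : J)) (H i) = c ⟨i, hi⟩ * B (H i) (H i) := by
        rw [LinearMap.BilinForm.sum_left]
        simp only [LinearMap.BilinForm.smul_left, smul_eq_mul]
        rw [Finset.sum_eq_single (⟨i, hi⟩ : T)]
        · intro k _ hk
          have : (k : J) ≠ i := fun e => hk (Subtype.ext e)
          rw [horth _ _ this]; ring
        · intro h; exact absurd (Finset.mem_univ _) h
      rw [hc] at this
      simp only [map_zero, LinearMap.zero_apply] at this
      have hneg' : B (H i) (H i) < 0 := by simpa [hS] using hiS
      rcases mul_eq_zero.mp this.symm with h | h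
      · exact h
      · exact absurd h (ne_of_lt hneg')
    have hi₀ : j₀ ∈ T := Finset.mem_insert_self _ _
    have hsum : ∑ k : T, c k • H (k : J) = c ⟨j₀, hi₀⟩ • H j₀ := by
      rw [Finset.sum_eq_single (⟨j₀, hi₀⟩ : T)]
      · rintro ⟨k, hk⟩ _ hkne
        have : k ∈ S := by
          rcases Finset.mem_insert.mp hk with h | h
          · exact absurd (Subtype.ext h) hkne
          · exact h
        rw [hSzero ⟨k, hk⟩ this, zero_smul]
      · intro h; exact absurd (Finset.mem_univ _) h
    rw [hc] at hsum
    have hc₀ : c ⟨j₀, hi₀⟩ = 0 := by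
      rcases smul_eq_zero.mp hsum.symm with h | h
      · exact h
      · exact absurd h (hne j₀)
    rintro ⟨i, hi⟩
    rcases Finset.mem_insert.mp hi with h | h
    · subst h; exact hc₀
    · exact hSzero ⟨i, hi⟩ h
  have hcardT : T.card ≤ Module.finrank ℚ W := by
    have hli' : LinearIndependent ℚ (fun i : T => (⟨H (i : J),
        Submodule.subset_span (Set.mem_range_self i)⟩ : W)) := by
      apply LinearIndependent.of_comp W.subtype
      convert hli
      rfl
    have := hli'.fintype_card_le_finrank
    simpa using this
  have hScard : S.card ≤ d - 2 := by
    have : T.card = S.card + 1 := Finset.card_insert_of_notMem hj₀S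
    omega
  -- translate to ncard
  have hnegcard : {j : J | B (H j) (H j) < 0}.ncard = S.card := by
    rw [Set.ncard_eq_toFinset_card', Set.toFinset_setOf]
  have hzerocard : {j : J | B (H j) (H j) = 0}.ncard
      = (Finset.univ.filter (fun j => B (H j) (H j) = 0)).card := by
    rw [Set.ncard_eq_toFinset_card', Set.toFinset_setOf]
  have hfilter_eq : Finset.univ.filter (fun j => ¬ B (H j) (H j) < 0)
      = Finset.univ.filter (fun j => B (H j) (H j) = 0) := by
    apply Finset.filter_congr
    intro j _
    constructor
    · intro h
      exact le_antisymm (not_lt.mp (hnp j)) (not_lt.mp h)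
    · intro h
      simp [h]
  have hpartition : S.card + (Finset.univ.filter (fun j => B (H j) (H j) = 0)).card
      = Fintype.card J := by
    rw [← hfilter_eq, hS,
      Finset.card_filter_add_card_filter_not (p := fun j => B (H j) (H j) < 0),
      Finset.card_univ]
  refine ⟨hpos, ?_, ?_⟩
  · omega
  · omega
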